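/- Suppose T is an observation tree for a complete Mealy machine M (i.e., there is a functional simulation f : T → M), with basis S and frontier F, such that S is complete, every state in F is identified, and |S| equals the number of equivalence classes of the relation ≈ on Q^M. Then the unique hypothesis H for T satisfies H ≈ M, i.e., q0^H ≈ q0^M. -/

import Mathlib

open scoped Classical

/-- A Mealy machine over input alphabet `I` and output alphabet `O`, with state
type `Q`, initial state `q0`, and a partial combined output/transition map
`trans : Q × I ⇀ O × Q` (so the output and transition functions are defined on
exactly the same pairs). -/
structure Mealy (Q I O : Type) where
  q0 : Q
  trans : Q → I → Option (O × Q)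

namespace Mealy

variable {Q Q' I O : Type}

/-- Extension of the combined output/transition map to input words. -/
def stepStar (M : Mealy Q I O) : Q → List I → Option (List O × Q)
  | q, [] => some ([], q)
  | q, i :: σ => (M.trans q i).bind fun p =>
      (stepStar M p.2 σ).map fun r => (p.1 :: r.1, r.2)

/-- `λ(q, σ)`: the output word produced from `q` on input word `σ` (if defined);
this is also the semantics `⟦q⟧ : I* ⇀ O*` of the state `q`. -/
def outStar (M : Mealy Q I O) (q : Q) (σ : List I) : Option (List O) :=
  (M.stepStar q σ).map Prod.fst

/-- `δ(q, σ)`: the state reached from `q` on input word `σ` (if defined). -/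
def delStar (M : Mealy Q I O) (q : Q) (σ : List I) : Option Q :=
  (M.stepStar q σ).map Prod.snd

/-- `σ ⊢ q # p`: the word `σ` witnesses apartness of `q` and `p`. -/
def ApartW (M : Mealy Q I O) (σ : List I) (q p : Q) : Prop :=
  (M.outStar q σ).isSome ∧ (M.outStar p σ).isSome ∧ M.outStar q σ ≠ M.outStar p σ

/-- `q # p`: states `q` and `p` are apart. -/
def Apart (M : Mealy Q I O) (q p : Q) : Prop := ∃ σ, M.ApartW σ q p

/-- `q ≈ r`: states `q` (of `M`) and `r` (of `N`) are equivalent, i.e. have equal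
semantics `⟦q⟧ = ⟦r⟧` as partial maps `I* ⇀ O*`. -/
def StateEquiv (M : Mealy Q I O) (N : Mealy Q' I O) (q : Q) (r : Q') : Prop :=
  ∀ σ, M.outStar q σ = N.outStar r σ

/-- A functional simulation `f : M → N`. -/
def FunSim (M : Mealy Q I O) (N : Mealy Q' I O) (f : Q → Q') : Prop :=
  f M.q0 = N.q0 ∧
    ∀ q i o q'', M.trans q i = some (o, q'') → N.trans (f q) i = some (o, f q'')

/-- A Mealy machine is complete if its transition map is total. -/
def Complete (M : Mealy Q I O) : Prop := ∀ q i, (M.trans q i).isSome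

/-- A Mealy machine is a tree if every state is reached from the root by a
unique input word (its access sequence). -/
def IsTree (M : Mealy Q I O) : Prop :=
  ∀ q : Q, ∃! σ : List I, M.delStar M.q0 σ = some q

/-- `S` is a basis of the observation tree `T`: a subtree containing the root
whose states are pairwise apart. -/
structure IsBasis (T : Mealy Q I O) (S : Set Q) : Prop where
  root_mem : T.q0 ∈ S
  subtree_closed : ∀ q i o q', T.trans q i = some (o, q') → q' ∈ S → q ∈ S
  pairwise_apart : ∀ p ∈ S, ∀ q ∈ S, p ≠ q → T.Apart p q

/-- The frontier `F`: immediate non-basis successors of basis states. -/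
def frontier (T : Mealy Q I O) (S : Set Q) : Set Q :=
  {q' | q' ∉ S ∧ ∃ q ∈ S, ∃ i o, T.trans q i = some (o, q')}

/-- The basis `S` is complete: each basis state has a transition for each input. -/
def BasisComplete (T : Mealy Q I O) (S : Set Q) : Prop :=
  ∀ q ∈ S, ∀ i : I, (T.trans q i).isSome

/-- A Mealy machine `H` with state set `S` contains the basis `S` of `T`:
`δ^H(q0^H, access(q)) = q` for every `q ∈ S`. -/
def ContainsBasis (T : Mealy Q I O) (S : Set Q) (H : Mealy ↥S I O) : Prop :=
  ∀ (q : ↥S) (σ : List I), T.delStar T.q0 σ = some (q : Q) → H.delStar H.q0 σ = some q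

/-- `H` is a hypothesis for the observation tree `T` with basis `S`. -/
def IsHypothesis (T : Mealy Q I O) (S : Set Q) (H : Mealy ↥S I O) : Prop :=
  H.Complete ∧ ContainsBasis T S H ∧
    ∀ (q : ↥S) (i : I) (o' : O) (p' : ↥S), H.trans q i = some (o', p') →
      ∀ (o : O) (p : Q), T.trans (q : Q) i = some (o, p) → o = o' ∧ ¬ T.Apart p (p' : Q)

/-- The equivalence `≈` on the states of a single machine, as a setoid. -/
def equivSetoid (M : Mealy Q I O) : Setoid Q :=
  ⟨fun q r => M.StateEquiv M q r,
   ⟨fun _ _ => rfl, fun h σ => (h σ).symm, fun h1 h2 σ => (h1 σ).trans (h2 σ)⟩⟩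

/-- `R` is a bisimulation between `M` and `N`. -/
def IsBisimulation (M : Mealy Q I O) (N : Mealy Q' I O) (R : Q → Q' → Prop) : Prop :=
  R M.q0 N.q0 ∧
    ∀ q r, R q r → ∀ i o q', M.trans q i = some (o, q') →
      ∃ r', N.trans r i = some (o, r') ∧ R q' r'

end Mealy

namespace Mealy

variable {Q Q' I O : Type}

theorem stepStar_cons' (M : Mealy Q I O) {q q' : Q} {i : I} {o : O}
    (h : M.trans q i = some (o, q')) (σ : List I) :
    M.stepStar q (i :: σ) = (M.stepStar q' σ).map fun r => (o :: r.1, r.2) := by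
  simp [stepStar, h]

theorem outStar_nil' (M : Mealy Q I O) (q : Q) : M.outStar q [] = some [] := rfl

theorem outStar_cons' (M : Mealy Q I O) {q q' : Q} {i : I} {o : O}
    (h : M.trans q i = some (o, q')) (σ : List I) :
    M.outStar q (i :: σ) = (M.outStar q' σ).map (o :: ·) := by
  simp [outStar, stepStar_cons' M h, Option.map_map]
  rfl

theorem sim_stepStar {M : Mealy Q I O} {N : Mealy Q' I O} {f : Q → Q'}
    (hf : M.FunSim N f) :
    ∀ (σ : List I) (q : Q) (w : List O) (q' : Q),
      M.stepStar q σ = some (w, q') → N.stepStar (f q) σ = some (w, f q')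
  | [], q, w, q', h => by
      simp only [stepStar, Option.some.injEq, Prod.mk.injEq] at h
      obtain ⟨rfl, rfl⟩ := h
      rfl
  | i :: σ, q, w, q', h => by
      simp only [stepStar, Option.bind_eq_some_iff, Option.map_eq_some_iff] at h
      obtain ⟨⟨o, p⟩, hp, ⟨w', p'⟩, hstep, heq⟩ := h
      have h1 := hf.2 q i o p hp
      have h2 := sim_stepStar hf σ p w' p' hstep
      cases heq
      simp [stepStar, h1, h2]

theorem sim_outStar {M : Mealy Q I O} {N : Mealy Q' I O} {f : Q → Q'}
    (hf : M.FunSim N f) {σ : List I} {q : Q} {w : List O}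
    (h : M.outStar q σ = some w) : N.outStar (f q) σ = some w := by
  simp only [outStar, Option.map_eq_some_iff] at h
  obtain ⟨⟨w', q'⟩, hstep, heq⟩ := h
  simp only [outStar, sim_stepStar hf σ q w' q' hstep, Option.map_some]
  exact congrArg some heq

theorem apart_map {M : Mealy Q I O} {N : Mealy Q' I O} {f : Q → Q'}
    (hf : M.FunSim N f) {q p : Q} (h : M.Apart q p) : N.Apart (f q) (f p) := by
  obtain ⟨σ, h1, h2, h3⟩ := h
  obtain ⟨w1, hw1⟩ := Option.isSome_iff_exists.1 h1
  obtain ⟨w2, hw2⟩ := Option.isSome_iff_exists.1 h2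
  refine ⟨σ, ?_, ?_, ?_⟩
  · rw [sim_outStar hf hw1]; rfl
  · rw [sim_outStar hf hw2]; rfl
  · rw [sim_outStar hf hw1, sim_outStar hf hw2]
    rw [hw1, hw2] at h3; exact h3

theorem apart_not_equiv {M : Mealy Q I O} {q p : Q}
    (h : M.Apart q p) (he : M.StateEquiv M q p) : False := by
  obtain ⟨σ, _, _, h3⟩ := h
  exact h3 (he σ)

theorem equiv_step {M : Mealy Q I O} {q r : Q} (he : M.StateEquiv M q r)
    {i : I} {o o2 : O} {q' r' : Q}
    (hq : M.trans q i = some (o, q')) (hr : M.trans r i = some (o2, r')) :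
    o = o2 ∧ M.StateEquiv M q' r' := by
  have h1 := he [i]
  rw [outStar_cons' M hq, outStar_cons' M hr] at h1
  simp [outStar_nil'] at h1
  refine ⟨h1, fun σ => ?_⟩
  have h2 := he (i :: σ)
  rw [outStar_cons' M hq, outStar_cons' M hr, h1] at h2
  exact Option.map_injective (List.cons_injective) h2

end Mealy

/-- If `T` is an observation tree for a complete Mealy machine `M`
(via a functional simulation `f : T → M`) with complete basis `S`, all frontier
states identified, and `|S|` equal to the number of equivalence classes of `≈`
on `Q^M`, then the unique hypothesis `H` for `T` satisfies `H ≈ M`. -/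
theorem statement_6 {QT QM I O : Type} [Fintype I] [Fintype QT] [Fintype QM]
    (T : Mealy QT I O) (M : Mealy QM I O) (hM : M.Complete)
    (f : QT → QM) (hf : T.FunSim M f)
    (htree : T.IsTree) (S : Set QT) (hS : T.IsBasis S)
    (hcomp : T.BasisComplete S)
    (hident : ∀ p ∈ T.frontier S,
      ∃ b ∈ S, ¬ T.Apart p b ∧ ∀ b' ∈ S, b' ≠ b → T.Apart p b')
    (hcard : Nat.card ↥S = Nat.card (Quotient M.equivSetoid))
    (H : Mealy ↥S I O) (hH : T.IsHypothesis S H) :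
    H.StateEquiv M H.q0 M.q0 := by
  -- every state of M is equivalent to f b for some basis state b
  have hsurj : ∀ m : QM, ∃ b : ↥S, M.StateEquiv M (f (b : QT)) m := by
    intro m
    set g : ↥S → Quotient M.equivSetoid := fun b => Quotient.mk M.equivSetoid (f (b : QT))
    have hinj : Function.Injective g := by
      intro b b' hgb
      by_contra hne
      have hap : T.Apart (b : QT) (b' : QT) :=
        hS.pairwise_apart _ b.2 _ b'.2 (fun h => hne (Subtype.ext h))
      exact Mealy.apart_not_equiv (Mealy.apart_map hf hap) (Quotient.exact hgb)
    have hbij : Function.Bijective g :=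
      (Nat.bijective_iff_injective_and_card g).2 ⟨hinj, hcard⟩
    obtain ⟨b, hb⟩ := hbij.2 (Quotient.mk M.equivSetoid m)
    exact ⟨b, Quotient.exact hb⟩
  -- key: if T.trans b i = (o, p) and p not apart from basis state p', then f p ≈ f p'
  have hkey : ∀ (b : ↥S) (i : I) (o : O) (p : QT) (p' : ↥S),
      T.trans (b : QT) i = some (o, p) → ¬ T.Apart p (p' : QT) →
      M.StateEquiv M (f p) (f (p' : QT)) := by
    intro b i o p p' htr hnap
    by_cases hp : p ∈ S
    · by_cases hpe : p = (p' : QT)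
      · rw [hpe]; exact fun σ => rfl
      · exact absurd (hS.pairwise_apart _ hp _ p'.2 hpe) hnap
    · have hfr : p ∈ T.frontier S := ⟨hp, (b : QT), b.2, i, o, htr⟩
      obtain ⟨b0, hb0S, hb0nap, hb0ap⟩ := hident p hfr
      have hp'b0 : (p' : QT) = b0 := by
        by_contra hne
        exact hnap (hb0ap _ p'.2 hne)
      obtain ⟨b'', hb''⟩ := hsurj (f p)
      have hb''b0 : (b'' : QT) = b0 := by
        by_contra hne
        have hap : T.Apart p (b'' : QT) := hb0ap _ b''.2 hne
        exact Mealy.apart_not_equiv (Mealy.apart_map hf hap) (fun σ => (hb'' σ).symm)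
      rw [hp'b0, ← hb''b0]
      exact fun σ => (hb'' σ).symm
  -- main induction
  have hmain : ∀ (σ : List I) (b : ↥S) (m : QM),
      M.StateEquiv M (f (b : QT)) m → H.outStar b σ = M.outStar m σ := by
    intro σ
    induction σ with
    | nil => intro b m _; rfl
    | cons i σ ih =>
      intro b m hbm
      obtain ⟨⟨o', p'⟩, hH'⟩ := Option.isSome_iff_exists.1 (hH.1 b i)
      obtain ⟨⟨o, p⟩, hT'⟩ := Option.isSome_iff_exists.1 (hcomp _ b.2 i)
      obtain ⟨ho, hnap⟩ := hH.2.2 b i o' p' hH' o p hT'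
      obtain ⟨⟨om, m'⟩, hMm⟩ := Option.isSome_iff_exists.1 (hM m i)
      have hsim := hf.2 _ i o p hT'
      obtain ⟨hoom, hpm'⟩ := Mealy.equiv_step hbm hsim hMm
      have hpp' := hkey b i o p p' hT' hnap
      have hp'm' : M.StateEquiv M (f (p' : QT)) m' :=
        fun σ' => (hpp' σ').symm.trans (hpm' σ')
      rw [Mealy.outStar_cons' H hH', Mealy.outStar_cons' M hMm, ih p' m' hp'm',
        ← ho, hoom]
  -- initial states
  have hq0 : (H.q0 : QT) = T.q0 := by
    have h0 : T.delStar T.q0 [] = some ((⟨T.q0, hS.root_mem⟩ : ↥S) : QT) := rfl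
    have := hH.2.1 ⟨T.q0, hS.root_mem⟩ [] h0
    simp [Mealy.delStar, Mealy.stepStar] at this
    rw [this]
  intro σ
  apply hmain σ H.q0 M.q0
  rw [hq0, hf.1]
  exact fun _ => rfl
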